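/- Assume ℛ₀ > 1 and c > c*, and let λ₁ be the smaller positive root of Δ(·, c) = 0. Then there exist ε₁ ∈ (0, λ₁) and M₁ > 1 such that the function S⁻(ξ) := max{S₀(1 − M₁e^{ε₁ξ}), 0} satisfies, for every ξ ≠ 𝔛₁ := (1/ε₁)·ln(1/M₁), the differential inequality c·(S⁻)'(ξ) ≤ d₁(S⁻(ξ+1) + S⁻(ξ−1) − 2S⁻(ξ)) + Λ − μ₁·S⁻(ξ) − β·S⁻(ξ)·f(e^{λ₁ξ}). In particular the conclusion holds whenever ε₁ ∈ (0, λ₁) is small enough that μ₁ + cε₁ > d₁(e^{ε₁} + e^{−ε₁} − 2) and M₁ > 1 satisfies M₁ ≥ β·f'(0)/(μ₁ + cε₁ − d₁(e^{ε₁} + e^{−ε₁} − 2)). -/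

import Mathlib

open Real Filter Topology

lemma f_nonneg_aux (f : ℝ → ℝ) (hf0 : f 0 = 0) (hfC1 : ContDiff ℝ 1 f)
    (hf' : ∀ I : ℝ, 0 ≤ I → 0 < deriv f I) :
    ∀ I : ℝ, 0 ≤ I → 0 ≤ f I := by
  have hmono : StrictMonoOn f (Set.Ici (0:ℝ)) := by
    apply strictMonoOn_of_deriv_pos (convex_Ici 0) (hfC1.continuous.continuousOn)
    intro x hx
    rw [interior_Ici] at hx
    exact hf' x hx.le
  intro I hI
  rcases eq_or_lt_of_le hI with h | h
  · simp [← h, hf0]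
  · have := hmono (Set.self_mem_Ici) (Set.mem_Ici.mpr hI) h
    rw [hf0] at this; exact this.le

lemma f_le_aux (f : ℝ → ℝ) (hf0 : f 0 = 0) (hfC1 : ContDiff ℝ 1 f)
    (hfratio : ∀ I J : ℝ, 0 < I → I ≤ J → f J / J ≤ f I / I) :
    ∀ I : ℝ, 0 ≤ I → f I ≤ deriv f 0 * I := by
  intro I hI
  rcases eq_or_lt_of_le hI with h | h
  · simp [← h, hf0]
  have hd : HasDerivAt f (deriv f 0) 0 :=
    ((hfC1.differentiable one_ne_zero) 0).hasDerivAt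
  have hslope := hasDerivAt_iff_tendsto_slope.mp hd
  have hsub : (𝓝[>] (0:ℝ)) ≤ 𝓝[≠] (0:ℝ) :=
    nhdsWithin_mono _ (fun x hx => ne_of_gt hx)
  have hev : ∀ᶠ x in 𝓝[>] (0:ℝ), f I / I ≤ slope f 0 x := by
    filter_upwards [Ioc_mem_nhdsGT_of_mem ⟨le_refl (0:ℝ), h⟩] with x hx
    have := hfratio x I hx.1 hx.2
    rw [slope_def_field]
    rw [hf0]
    simpa [div_eq_div_iff] using this
  have hle : f I / I ≤ deriv f 0 := ge_of_tendsto (hslope.mono_left hsub) hev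
  calc f I = (f I / I) * I := by field_simp
    _ ≤ deriv f 0 * I := by
        apply mul_le_mul_of_nonneg_right hle h.le

set_option maxHeartbeats 1000000 in
lemma main_aux
    (d₁ Λ β μ₁ : ℝ) (hd₁ : 0 < d₁) (hΛ : 0 < Λ) (hβ : 0 < β) (hμ₁ : 0 < μ₁)
    (f : ℝ → ℝ) (hf0 : f 0 = 0) (hfC1 : ContDiff ℝ 1 f)
    (hf' : ∀ I : ℝ, 0 ≤ I → 0 < deriv f I)
    (hfratio : ∀ I J : ℝ, 0 < I → I ≤ J → f J / J ≤ f I / I)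
    (c : ℝ) (hcpos : 0 < c)
    (lam₁ : ℝ) (hlam₁pos : 0 < lam₁)
    (ε₁ M₁ : ℝ) (hε : 0 < ε₁) (hεlt : ε₁ < lam₁)
    (hD : d₁ * (Real.exp ε₁ + Real.exp (-ε₁) - 2) < μ₁ + c * ε₁)
    (hM1 : 1 < M₁)
    (hM2 : β * deriv f 0 / (μ₁ + c * ε₁ - d₁ * (Real.exp ε₁ + Real.exp (-ε₁) - 2)) ≤ M₁) :
    (∀ ξ : ℝ, ξ ≠ (1 / ε₁) * Real.log (1 / M₁) →
        c * deriv (fun η : ℝ => max ((Λ / μ₁) * (1 - M₁ * Real.exp (ε₁ * η))) 0) ξ ≤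
          d₁ * (max ((Λ / μ₁) * (1 - M₁ * Real.exp (ε₁ * (ξ + 1)))) 0
              + max ((Λ / μ₁) * (1 - M₁ * Real.exp (ε₁ * (ξ - 1)))) 0
              - 2 * max ((Λ / μ₁) * (1 - M₁ * Real.exp (ε₁ * ξ))) 0)
            + Λ - μ₁ * max ((Λ / μ₁) * (1 - M₁ * Real.exp (ε₁ * ξ))) 0
            - β * max ((Λ / μ₁) * (1 - M₁ * Real.exp (ε₁ * ξ))) 0
              * f (Real.exp (lam₁ * ξ))) := by
  intro ξ hξ
  set S₀ : ℝ := Λ / μ₁ with hS₀def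
  have hS₀ : 0 < S₀ := div_pos hΛ hμ₁
  have hΛS : μ₁ * S₀ = Λ := by rw [hS₀def]; field_simp
  have hMpos : 0 < M₁ := lt_trans one_pos hM1
  set D : ℝ := μ₁ + c * ε₁ - d₁ * (Real.exp ε₁ + Real.exp (-ε₁) - 2) with hDdef
  have hDpos : 0 < D := by simp only [hDdef]; linarith
  have hβf : β * deriv f 0 ≤ M₁ * D := by
    rw [div_le_iff₀ hDpos] at hM2; linarith
  set X : ℝ := (1 / ε₁) * Real.log (1 / M₁) with hXdef
  have hiff : ∀ η : ℝ, η < X ↔ M₁ * Real.exp (ε₁ * η) < 1 := by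
    intro η
    have h1 : ε₁ * X = Real.log (1 / M₁) := by
      rw [hXdef]; field_simp
    constructor
    · intro h
      have h2 : ε₁ * η < Real.log (1 / M₁) := by
        rw [← h1]; exact (mul_lt_mul_iff_right₀ hε).mpr h
      have h3 : Real.exp (ε₁ * η) < 1 / M₁ := by
        calc Real.exp (ε₁ * η) < Real.exp (Real.log (1 / M₁)) := Real.exp_lt_exp.mpr h2
          _ = 1 / M₁ := Real.exp_log (by positivity)
      rw [lt_div_iff₀ hMpos] at h3; linarith [h3]
    · intro h
      have h3 : Real.exp (ε₁ * η) < 1 / M₁ := by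
        rw [lt_div_iff₀ hMpos]; linarith
      have h2 : ε₁ * η < Real.log (1 / M₁) := by
        rw [← Real.exp_lt_exp, Real.exp_log (by positivity)]; exact h3
      rw [← h1] at h2
      exact (mul_lt_mul_iff_right₀ hε).mp h2
  have hXneg : X < 0 := by
    have hlog : Real.log (1 / M₁) < 0 :=
      Real.log_neg (by positivity) (by rw [div_lt_one hMpos]; exact hM1)
    rw [hXdef]
    exact mul_neg_of_pos_of_neg (by positivity) hlog
  rcases hξ.lt_or_gt with hlt | hgt
  · -- ξ < X : the max equals the smooth branch
    have hξneg : ξ < 0 := lt_trans hlt hXneg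
    have hm : M₁ * Real.exp (ε₁ * ξ) < 1 := (hiff ξ).mp hlt
    have hmax : max (S₀ * (1 - M₁ * Real.exp (ε₁ * ξ))) 0
        = S₀ * (1 - M₁ * Real.exp (ε₁ * ξ)) := by
      apply max_eq_left
      have : 0 ≤ 1 - M₁ * Real.exp (ε₁ * ξ) := by linarith
      positivity
    have hev : (fun η : ℝ => max (S₀ * (1 - M₁ * Real.exp (ε₁ * η))) 0)
        =ᶠ[𝓝 ξ] (fun η : ℝ => S₀ * (1 - M₁ * Real.exp (ε₁ * η))) := by
      filter_upwards [Iio_mem_nhds hlt] with η hη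
      have hmη : M₁ * Real.exp (ε₁ * η) < 1 := (hiff η).mp hη
      apply max_eq_left
      have : 0 ≤ 1 - M₁ * Real.exp (ε₁ * η) := by linarith
      positivity
    have hda : HasDerivAt (fun η : ℝ => S₀ * (1 - M₁ * Real.exp (ε₁ * η)))
        (S₀ * (-(M₁ * (Real.exp (ε₁ * ξ) * ε₁)))) ξ := by
      have h1 : HasDerivAt (fun η : ℝ => ε₁ * η) ε₁ ξ := by
        simpa using (hasDerivAt_id ξ).const_mul ε₁
      exact (((h1.exp).const_mul M₁).const_sub 1).const_mul S₀
    have hder : deriv (fun η : ℝ => max (S₀ * (1 - M₁ * Real.exp (ε₁ * η))) 0) ξ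
        = S₀ * (-(M₁ * (Real.exp (ε₁ * ξ) * ε₁))) := by
      rw [hev.deriv_eq]; exact hda.deriv
    rw [hder, hmax]
    -- lower bounds for neighbor terms
    have hA : S₀ * (1 - M₁ * Real.exp (ε₁ * (ξ + 1)))
        ≤ max (S₀ * (1 - M₁ * Real.exp (ε₁ * (ξ + 1)))) 0 := le_max_left _ _
    have hB : S₀ * (1 - M₁ * Real.exp (ε₁ * (ξ - 1)))
        ≤ max (S₀ * (1 - M₁ * Real.exp (ε₁ * (ξ - 1)))) 0 := le_max_left _ _
    have hexp1 : Real.exp (ε₁ * (ξ + 1)) = Real.exp (ε₁ * ξ) * Real.exp ε₁ := by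
      rw [← Real.exp_add]; ring_nf
    have hexp2 : Real.exp (ε₁ * (ξ - 1)) = Real.exp (ε₁ * ξ) * Real.exp (-ε₁) := by
      rw [← Real.exp_add]; ring_nf
    rw [hexp1] at hA
    rw [hexp2] at hB
    have hA' := mul_le_mul_of_nonneg_left hA hd₁.le
    have hB' := mul_le_mul_of_nonneg_left hB hd₁.le
    -- key estimate
    set E : ℝ := Real.exp (ε₁ * ξ) with hEdef
    have hEpos : 0 < E := Real.exp_pos _
    set I : ℝ := Real.exp (lam₁ * ξ) with hIdef
    have hIpos : 0 < I := Real.exp_pos _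
    have hIle : I ≤ E := by
      rw [hIdef, hEdef]
      apply Real.exp_le_exp.mpr
      nlinarith
    have hfI0 : 0 ≤ f I := f_nonneg_aux f hf0 hfC1 hf' I hIpos.le
    have hfI1 : f I ≤ deriv f 0 * I := f_le_aux f hf0 hfC1 hfratio I hIpos.le
    have hd0 : 0 < deriv f 0 := hf' 0 le_rfl
    have key : β * (S₀ * (1 - M₁ * E)) * f I ≤ S₀ * (M₁ * E) * D := by
      have s1 : β * (S₀ * (1 - M₁ * E)) * f I ≤ β * S₀ * f I := by
        apply mul_le_mul_of_nonneg_right _ hfI0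
        have hpos : 0 ≤ β * S₀ * (M₁ * E) := by positivity
        nlinarith [hpos]
      have s2 : β * S₀ * f I ≤ β * S₀ * (deriv f 0 * I) :=
        mul_le_mul_of_nonneg_left hfI1 (by positivity)
      have s3 : β * S₀ * (deriv f 0 * I) ≤ β * S₀ * (deriv f 0 * E) := by
        apply mul_le_mul_of_nonneg_left _ (by positivity)
        exact mul_le_mul_of_nonneg_left hIle hd0.le
      have s4 : β * S₀ * (deriv f 0 * E) ≤ S₀ * (M₁ * E) * D := by
        calc β * S₀ * (deriv f 0 * E) = S₀ * E * (β * deriv f 0) := by ring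
          _ ≤ S₀ * E * (M₁ * D) :=
              mul_le_mul_of_nonneg_left hβf (by positivity)
          _ = S₀ * (M₁ * E) * D := by ring
      linarith
    rw [hDdef] at key
    rw [hexp1, hexp2]
    linarith [hA', hB', key, hΛS]
  · -- X < ξ : the max at ξ is 0
    have hnot : ¬ (M₁ * Real.exp (ε₁ * ξ) < 1) := by
      rw [← hiff ξ]; exact not_lt.mpr hgt.le
    have hge : 1 ≤ M₁ * Real.exp (ε₁ * ξ) := not_lt.mp hnot
    have hmax : max (S₀ * (1 - M₁ * Real.exp (ε₁ * ξ))) 0 = 0 := by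
      apply max_eq_right
      have h1 : 1 - M₁ * Real.exp (ε₁ * ξ) ≤ 0 := by linarith
      nlinarith
    have hev : (fun η : ℝ => max (S₀ * (1 - M₁ * Real.exp (ε₁ * η))) 0)
        =ᶠ[𝓝 ξ] (fun _ : ℝ => (0:ℝ)) := by
      filter_upwards [Ioi_mem_nhds hgt] with η hη
      have hnotη : ¬ (M₁ * Real.exp (ε₁ * η) < 1) := by
        rw [← hiff η]; exact not_lt.mpr hη.le
      have hgeη : 1 ≤ M₁ * Real.exp (ε₁ * η) := not_lt.mp hnotη
      apply max_eq_right
      have h1 : 1 - M₁ * Real.exp (ε₁ * η) ≤ 0 := by linarith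
      nlinarith
    have hder : deriv (fun η : ℝ => max (S₀ * (1 - M₁ * Real.exp (ε₁ * η))) 0) ξ = 0 := by
      rw [hev.deriv_eq]; exact deriv_const ξ 0
    rw [hder, hmax]
    have hA : (0:ℝ) ≤ max (S₀ * (1 - M₁ * Real.exp (ε₁ * (ξ + 1)))) 0 := le_max_right _ _
    have hB : (0:ℝ) ≤ max (S₀ * (1 - M₁ * Real.exp (ε₁ * (ξ - 1)))) 0 := le_max_right _ _
    have h2 := mul_nonneg hd₁.le (add_nonneg hA hB)
    nlinarith [h2]

/-- **Lower solution for the susceptible component** (Lemma 2.3).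
Assume `ℛ₀ > 1`, `c > c*` and let `λ₁` be the smaller positive root of `Δ(·, c) = 0`.
Then there exist `ε₁ ∈ (0, λ₁)` and `M₁ > 1` such that
`S⁻(ξ) = max{S₀(1 − M₁e^{ε₁ξ}), 0}` satisfies the lower-solution differential
inequality away from `𝔛₁ = (1/ε₁)ln(1/M₁)`; in particular this holds whenever
`ε₁ ∈ (0, λ₁)` satisfies `μ₁ + cε₁ > d₁(e^{ε₁} + e^{−ε₁} − 2)` and `M₁ > 1` satisfies
`M₁ ≥ βf'(0)/(μ₁ + cε₁ − d₁(e^{ε₁} + e^{−ε₁} − 2))`. -/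
theorem lower_solution_S
    (d₁ d₂ Λ β μ₁ μ₂ : ℝ) (hd₁ : 0 < d₁) (hd₂ : 0 < d₂) (hΛ : 0 < Λ)
    (hβ : 0 < β) (hμ₁ : 0 < μ₁) (hμ₂ : 0 < μ₂)
    (f : ℝ → ℝ) (hf0 : f 0 = 0) (hfC1 : ContDiff ℝ 1 f)
    (hf' : ∀ I : ℝ, 0 ≤ I → 0 < deriv f I)
    (hfratio : ∀ I J : ℝ, 0 < I → I ≤ J → f J / J ≤ f I / I)
    (hR₀ : 1 < β * (Λ / μ₁) * deriv f 0 / μ₂)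
    (lamstar cstar : ℝ) (hlamstar : 0 < lamstar) (hcstar : 0 < cstar)
    (hΔstar : d₂ * (Real.exp lamstar + Real.exp (-lamstar) - 2)
      - cstar * lamstar + β * (Λ / μ₁) * deriv f 0 - μ₂ = 0)
    (hdΔstar : d₂ * (Real.exp lamstar - Real.exp (-lamstar)) - cstar = 0)
    (c : ℝ) (hc : cstar < c)
    (lam₁ : ℝ) (hlam₁pos : 0 < lam₁) (hlam₁lt : lam₁ < lamstar)
    (hlam₁root : d₂ * (Real.exp lam₁ + Real.exp (-lam₁) - 2)
      - c * lam₁ + β * (Λ / μ₁) * deriv f 0 - μ₂ = 0) :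
    (∃ ε₁ M₁ : ℝ, 0 < ε₁ ∧ ε₁ < lam₁ ∧ 1 < M₁ ∧
      (∀ ξ : ℝ, ξ ≠ (1 / ε₁) * Real.log (1 / M₁) →
        c * deriv (fun η : ℝ => max ((Λ / μ₁) * (1 - M₁ * Real.exp (ε₁ * η))) 0) ξ ≤
          d₁ * (max ((Λ / μ₁) * (1 - M₁ * Real.exp (ε₁ * (ξ + 1)))) 0
              + max ((Λ / μ₁) * (1 - M₁ * Real.exp (ε₁ * (ξ - 1)))) 0
              - 2 * max ((Λ / μ₁) * (1 - M₁ * Real.exp (ε₁ * ξ))) 0)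
            + Λ - μ₁ * max ((Λ / μ₁) * (1 - M₁ * Real.exp (ε₁ * ξ))) 0
            - β * max ((Λ / μ₁) * (1 - M₁ * Real.exp (ε₁ * ξ))) 0
              * f (Real.exp (lam₁ * ξ)))) ∧
    (∀ ε₁ M₁ : ℝ, 0 < ε₁ → ε₁ < lam₁ →
      d₁ * (Real.exp ε₁ + Real.exp (-ε₁) - 2) < μ₁ + c * ε₁ →
      1 < M₁ →
      β * deriv f 0 / (μ₁ + c * ε₁ - d₁ * (Real.exp ε₁ + Real.exp (-ε₁) - 2)) ≤ M₁ →
      (∀ ξ : ℝ, ξ ≠ (1 / ε₁) * Real.log (1 / M₁) →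
        c * deriv (fun η : ℝ => max ((Λ / μ₁) * (1 - M₁ * Real.exp (ε₁ * η))) 0) ξ ≤
          d₁ * (max ((Λ / μ₁) * (1 - M₁ * Real.exp (ε₁ * (ξ + 1)))) 0
              + max ((Λ / μ₁) * (1 - M₁ * Real.exp (ε₁ * (ξ - 1)))) 0
              - 2 * max ((Λ / μ₁) * (1 - M₁ * Real.exp (ε₁ * ξ))) 0)
            + Λ - μ₁ * max ((Λ / μ₁) * (1 - M₁ * Real.exp (ε₁ * ξ))) 0
            - β * max ((Λ / μ₁) * (1 - M₁ * Real.exp (ε₁ * ξ))) 0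
              * f (Real.exp (lam₁ * ξ)))) := by
  have hcpos : 0 < c := lt_trans hcstar hc
  have main := main_aux d₁ Λ β μ₁ hd₁ hΛ hβ hμ₁ f hf0 hfC1 hf' hfratio c hcpos
    lam₁ hlam₁pos
  constructor
  · -- existence of a good (ε₁, M₁)
    have hT : Filter.Tendsto
        (fun ε : ℝ => μ₁ + c * ε - d₁ * (Real.exp ε + Real.exp (-ε) - 2))
        (nhds 0) (nhds μ₁) := by
      have hcont : ContinuousAt
          (fun ε : ℝ => μ₁ + c * ε - d₁ * (Real.exp ε + Real.exp (-ε) - 2)) 0 := by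
        fun_prop
      have h0 : (fun ε : ℝ => μ₁ + c * ε - d₁ * (Real.exp ε + Real.exp (-ε) - 2)) 0
          = μ₁ := by norm_num
      have ht := hcont.tendsto
      have h0' : μ₁ + c * 0 - d₁ * (Real.exp 0 + Real.exp (-0) - 2) = μ₁ := by norm_num
      rw [h0'] at ht
      exact ht
    have hev1 : ∀ᶠ ε in nhds (0:ℝ),
        d₁ * (Real.exp ε + Real.exp (-ε) - 2) < μ₁ + c * ε := by
      filter_upwards [hT.eventually (eventually_gt_nhds hμ₁)] with ε hε
      linarith
    have hev2 : ∀ᶠ ε in nhds (0:ℝ), ε < lam₁ := eventually_lt_nhds hlam₁pos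
    have hev3 : ∀ᶠ ε in 𝓝[>] (0:ℝ),
        (d₁ * (Real.exp ε + Real.exp (-ε) - 2) < μ₁ + c * ε ∧ ε < lam₁) ∧ 0 < ε := by
      refine Filter.Eventually.and ?_ self_mem_nhdsWithin
      exact (hev1.and hev2).filter_mono nhdsWithin_le_nhds
    obtain ⟨ε₁, ⟨hεD, hεlt⟩, hεpos⟩ := hev3.exists
    refine ⟨ε₁,
      max 2 (β * deriv f 0 / (μ₁ + c * ε₁ - d₁ * (Real.exp ε₁ + Real.exp (-ε₁) - 2))),
      hεpos, hεlt, lt_of_lt_of_le one_lt_two (le_max_left _ _), ?_⟩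
    exact main ε₁ _ hεpos hεlt hεD
      (lt_of_lt_of_le one_lt_two (le_max_left _ _)) (le_max_right _ _)
  · intro ε₁ M₁ h1 h2 h3 h4 h5
    exact main ε₁ M₁ h1 h2 h3 h4 h5
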